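/- Let k, p, p* be real numbers with 1 < k < p < p*, and let S, Pr, θ > 0. Define λ* := θ^(−(p−k)/(p*−p)) · ((p*−p)·k)/((p*−k)·p) · (((p−k)·p*)/((p*−k)·p))^((p−k)/(p*−p)) · S^((p*−k)/(p*−p)) / Pr, and λ** := ((p*−p)/(p−k)) · (k/(p*−k))^((p*−k)/p*) · S^((p*−k)/(p*−p)) / (Pr · θ^((p−k)/(p*−p))). Then λ* < λ**. -/

import Mathlib

/-- The truncation threshold λ* is smaller than the Palais–Smale threshold λ**
(proof of Lemma 3.1(ii)). -/
theorem stmt_7 (k p ps : ℝ) (hk : 1 < k) (hkp : k < p) (hpps : p < ps)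
    (S Pr θ : ℝ) (hS : 0 < S) (hPr : 0 < Pr) (hθ : 0 < θ) :
    θ ^ (-(p - k) / (ps - p)) * ((ps - p) * k) / ((ps - k) * p) *
        ((p - k) * ps / ((ps - k) * p)) ^ ((p - k) / (ps - p)) *
        S ^ ((ps - k) / (ps - p)) / Pr
      < (ps - p) / (p - k) * (k / (ps - k)) ^ ((ps - k) / ps) *
          (S ^ ((ps - k) / (ps - p)) / (Pr * θ ^ ((p - k) / (ps - p)))) := by
  have hk0 : (0:ℝ) < k := by linarith
  have hp0 : (0:ℝ) < p := by linarith
  have hps0 : (0:ℝ) < ps := by linarith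
  have hpk : (0:ℝ) < p - k := by linarith
  have hpsk : (0:ℝ) < ps - k := by linarith
  have hpsp : (0:ℝ) < ps - p := by linarith
  set y : ℝ := k / (ps - k) with hy
  have hy0 : 0 < y := div_pos hk0 hpsk
  set t : ℝ := (ps - k) / ps with ht
  have hT : 0 < θ ^ ((p - k) / (ps - p)) := Real.rpow_pos_of_pos hθ _
  have hE : 0 < S ^ ((ps - k) / (ps - p)) := Real.rpow_pos_of_pos hS _
  have hyt : 0 < y ^ t := Real.rpow_pos_of_pos hy0 _
  -- the exponent k/ps is in (0,1)
  have hkps : k / ps < 1 := (div_lt_one hps0).2 (by linarith)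
  have hkps0 : 0 < k / ps := div_pos hk0 hps0
  -- claim: y ^ (k/ps) < p / (p - k)
  have hclaim : y ^ (k / ps) < p / (p - k) := by
    rcases le_or_gt y 1 with hy1 | hy1
    · have h1 : y ^ (k / ps) ≤ 1 := Real.rpow_le_one hy0.le hy1 hkps0.le
      have h2 : (1:ℝ) < p / (p - k) := (one_lt_div hpk).2 (by linarith)
      linarith
    · have h1 : y ^ (k / ps) < y ^ (1:ℝ) :=
        Real.rpow_lt_rpow_of_exponent_lt hy1 hkps
      rw [Real.rpow_one] at h1
      have h2 : y < k / (p - k) := by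
        rw [hy]
        exact div_lt_div_of_pos_left hk0 hpk (by linarith)
      have h3 : k / (p - k) < p / (p - k) := by
        apply div_lt_div_of_pos_right hkp hpk
      linarith
  -- hence y * ((p-k)/p) < y ^ t
  have hsum : t + k / ps = 1 := by rw [ht]; field_simp; ring
  have hsplit : y ^ t * y ^ (k / ps) = y := by
    rw [← Real.rpow_add hy0, hsum, Real.rpow_one]
  have hmul : y ^ (k / ps) * ((p - k) / p) < 1 := by
    have h := (lt_div_iff₀ hpk).1 hclaim
    rw [mul_div_assoc', div_lt_one hp0]
    linarith
  have hstep : y * ((p - k) / p) < y ^ t := by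
    calc y * ((p - k) / p) = y ^ t * (y ^ (k / ps) * ((p - k) / p)) := by
          rw [← mul_assoc, hsplit]
      _ < y ^ t * 1 := by
          exact mul_lt_mul_of_pos_left hmul hyt
      _ = y ^ t := mul_one _
  -- core inequality
  set B : ℝ := ((p - k) * ps / ((ps - k) * p)) ^ ((p - k) / (ps - p)) with hB
  have hB1 : B < 1 := by
    apply Real.rpow_lt_one (by positivity)
    · rw [div_lt_one (by positivity)]
      nlinarith
    · positivity
  have hB0 : 0 < B := Real.rpow_pos_of_pos (by positivity) _
  have hA0 : 0 < (ps - p) * k / ((ps - k) * p) := by positivity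
  have hcore : (ps - p) * k / ((ps - k) * p) * B
      < (ps - p) / (p - k) * y ^ t := by
    have h1 : (ps - p) * k / ((ps - k) * p) * B < (ps - p) * k / ((ps - k) * p) := by
      nlinarith
    have h2 : (ps - p) * k / ((ps - k) * p)
        = (ps - p) / (p - k) * (y * ((p - k) / p)) := by
      rw [hy]; field_simp
    have h3 : (ps - p) / (p - k) * (y * ((p - k) / p))
        < (ps - p) / (p - k) * y ^ t :=
      mul_lt_mul_of_pos_left hstep (by positivity)
    linarith
  -- now reduce the full statement
  have hneg : θ ^ (-(p - k) / (ps - p)) = (θ ^ ((p - k) / (ps - p)))⁻¹ := by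
    rw [neg_div, Real.rpow_neg hθ.le]
  rw [hneg]
  have hL : (θ ^ ((p - k) / (ps - p)))⁻¹ * ((ps - p) * k) / ((ps - k) * p) * B *
        S ^ ((ps - k) / (ps - p)) / Pr
      = ((ps - p) * k / ((ps - k) * p) * B) *
        (S ^ ((ps - k) / (ps - p)) / (Pr * θ ^ ((p - k) / (ps - p)))) := by
    field_simp
  rw [hL]
  exact mul_lt_mul_of_pos_right hcore (div_pos hE (mul_pos hPr hT))
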